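/- Let R = {(A|v) : A ∈ M_n(F_q), v ∈ F_q^n} with multiplication (A|v)(B|w) = (AB|Aw). For each v ∈ F_q^n, the set L_v = {(A|Av) : A ∈ M_n(F_q)} is a maximal left ideal of R generated by (I_n|v), and L_v = L_w if and only if v = w. -/

import Mathlib

/-- Left ideal of a (not necessarily unital) ring, as a set. -/
def IsLeftIdeal {R : Type*} [NonUnitalRing R] (L : Set R) : Prop :=
  0 ∈ L ∧ (∀ a ∈ L, ∀ b ∈ L, a + b ∈ L) ∧ (∀ a ∈ L, -a ∈ L) ∧
    ∀ (r : R), ∀ a ∈ L, r * a ∈ L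

/-- Maximal left ideal. -/
def IsMaximalLeftIdeal {R : Type*} [NonUnitalRing R] (M : Set R) : Prop :=
  IsLeftIdeal M ∧ M ≠ Set.univ ∧
    ∀ L : Set R, IsLeftIdeal L → M ⊂ L → L = Set.univ

/-- The ring of `(n+1) × (n+1)` matrices over `F` whose last row is zero. -/
def lastRowZero (n : ℕ) (F : Type*) [Field F] :
    NonUnitalSubring (Matrix (Fin (n + 1)) (Fin (n + 1)) F) where
  carrier := {M | ∀ j, M (Fin.last n) j = 0}
  zero_mem' := by intro j; simp
  add_mem' := by intro a b ha hb j; simp [Matrix.add_apply, ha j, hb j]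
  neg_mem' := by intro a ha j; simp [Matrix.neg_apply, ha j]
  mul_mem' := by
    intro a b ha hb j
    simp only [Set.mem_setOf_eq] at ha ⊢
    simp [Matrix.mul_apply, ha]

/-- The element `(A | v)` of the ring: top-left block `A`, last column `v`, last row zero. -/
def emb {n : ℕ} {F : Type*} [Field F] (A : Matrix (Fin n) (Fin n) F) (v : Fin n → F) :
    ↥(lastRowZero n F) :=
  ⟨Matrix.of fun i j =>
      Fin.lastCases 0 (fun i' => Fin.lastCases (v i') (fun j' => A i' j') j) i, by
    intro j
    simp [Matrix.of_apply]⟩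

/-- The left ideal `L_v = {(A | Av) : A ∈ M_n(F_q)}`. -/
def Lv {n : ℕ} {F : Type*} [Field F] (v : Fin n → F) : Set ↥(lastRowZero n F) :=
  {x | ∃ A : Matrix (Fin n) (Fin n) F, x = emb A (A.mulVec v)}

section Helpers
variable {n : ℕ} {F : Type*} [Field F]

@[simp] lemma emb_val_cc (A : Matrix (Fin n) (Fin n) F) (v : Fin n → F) (i j : Fin n) :
    (emb A v).val i.castSucc j.castSucc = A i j := by
  simp [emb]

@[simp] lemma emb_val_cl (A : Matrix (Fin n) (Fin n) F) (v : Fin n → F) (i : Fin n) :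
    (emb A v).val i.castSucc (Fin.last n) = v i := by
  simp [emb]

@[simp] lemma emb_val_l (A : Matrix (Fin n) (Fin n) F) (v : Fin n → F) (j : Fin (n+1)) :
    (emb A v).val (Fin.last n) j = 0 := by
  simp [emb]

lemma exists_emb (x : ↥(lastRowZero n F)) :
    ∃ A v, x = emb A v := by
  refine ⟨fun i j => x.val i.castSucc j.castSucc, fun i => x.val i.castSucc (Fin.last n), ?_⟩
  apply Subtype.ext
  refine Matrix.ext fun i j => ?_
  induction i using Fin.lastCases with
  | last => simp [emb, x.property j]
  | cast i =>
    induction j using Fin.lastCases with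
    | last => simp [emb]
    | cast j => simp [emb]

lemma emb_inj {A B : Matrix (Fin n) (Fin n) F} {v w : Fin n → F}
    (h : emb A v = emb B w) : A = B ∧ v = w := by
  constructor
  · ext i j
    have := congrArg (fun x => x.val i.castSucc j.castSucc) h
    simpa using this
  · funext i
    have := congrArg (fun x => x.val i.castSucc (Fin.last n)) h
    simpa using this

lemma emb_add (A B : Matrix (Fin n) (Fin n) F) (v w : Fin n → F) :
    emb A v + emb B w = emb (A + B) (v + w) := by
  apply Subtype.ext
  ext i j
  induction i using Fin.lastCases with
  | last => simp [Matrix.add_apply]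
  | cast i =>
    induction j using Fin.lastCases with
    | last => simp [Matrix.add_apply]
    | cast j => simp [Matrix.add_apply]

lemma emb_neg (A : Matrix (Fin n) (Fin n) F) (v : Fin n → F) :
    -emb A v = emb (-A) (-v) := by
  apply Subtype.ext
  ext i j
  induction i using Fin.lastCases with
  | last => simp [Matrix.neg_apply]
  | cast i =>
    induction j using Fin.lastCases with
    | last => simp [Matrix.neg_apply]
    | cast j => simp [Matrix.neg_apply]

lemma emb_zero : (emb 0 0 : ↥(lastRowZero n F)) = 0 := by
  apply Subtype.ext
  ext i j
  induction i using Fin.lastCases with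
  | last => simp
  | cast i =>
    induction j using Fin.lastCases with
    | last => simp
    | cast j => simp

lemma emb_mul (A B : Matrix (Fin n) (Fin n) F) (v w : Fin n → F) :
    emb A v * emb B w = emb (A * B) (A.mulVec w) := by
  apply Subtype.ext
  ext i j
  show ((emb A v).val * (emb B w).val) i j = _
  rw [Matrix.mul_apply]
  induction i using Fin.lastCases with
  | last => simp
  | cast i =>
    induction j using Fin.lastCases with
    | last =>
      rw [Fin.sum_univ_castSucc]
      simp [Matrix.mulVec, dotProduct]
    | cast j =>
      rw [Fin.sum_univ_castSucc]
      simp [Matrix.mul_apply]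

lemma emb_zsmul (k : ℤ) (A : Matrix (Fin n) (Fin n) F) (v : Fin n → F) :
    k • emb A v = emb ((k : F) • A) ((k : F) • v) := by
  apply Subtype.ext
  ext i j
  show (k • (emb A v).val) i j = _
  rw [Matrix.smul_apply]
  induction i using Fin.lastCases with
  | last => simp
  | cast i =>
    induction j using Fin.lastCases with
    | last => simp [zsmul_eq_mul]
    | cast j => simp [Matrix.smul_apply, zsmul_eq_mul]

end Helpers

section Main
variable {n : ℕ} {F : Type*} [Field F]

lemma key_univ (v : Fin n → F) (L : Set ↥(lastRowZero n F)) (hL : IsLeftIdeal L)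
    (hsub : Lv v ⊆ L) (z : Fin n → F) (hz : z ≠ 0) (hzL : emb 0 z ∈ L) :
    L = Set.univ := by
  obtain ⟨i0, hi0⟩ : ∃ i, z i ≠ 0 := by
    by_contra h
    push_neg at h
    exact hz (funext h)
  have hall : ∀ u : Fin n → F, emb 0 u ∈ L := by
    intro u
    set B : Matrix (Fin n) (Fin n) F := Matrix.vecMulVec u (Pi.single i0 (z i0)⁻¹) with hB
    have hBz : B.mulVec z = u := by
      funext i
      simp only [hB, Matrix.mulVec, dotProduct, Matrix.vecMulVec_apply,
        Pi.single_apply, mul_ite, mul_zero, ite_mul, zero_mul]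
      rw [Finset.sum_ite_eq' Finset.univ i0]
      simp [mul_assoc, inv_mul_cancel₀ hi0]
    have := hL.2.2.2 (emb B 0) _ hzL
    rwa [emb_mul, mul_zero, hBz] at this
  rw [Set.eq_univ_iff_forall]
  intro y
  obtain ⟨A, u, rfl⟩ := exists_emb y
  have h1 : emb A (A.mulVec v) ∈ L := hsub ⟨A, rfl⟩
  have h2 := hL.2.1 _ h1 _ (hall (u - A.mulVec v))
  rwa [emb_add, add_zero, add_sub_cancel] at h2

end Main

/-- For each `v ∈ F_q^n`, `L_v` is a maximal left ideal of `R` generated by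
`(I_n | v)`, and `L_v = L_w` iff `v = w`. -/
theorem Lv_properties {F : Type*} [Field F] [Fintype F] {n : ℕ} (hn : 1 ≤ n) :
    (∀ v : Fin n → F,
      IsLeftIdeal (Lv v) ∧ IsMaximalLeftIdeal (Lv v) ∧
        Lv v = {y | ∃ (r : ↥(lastRowZero n F)) (k : ℤ),
          y = r * emb 1 v + k • emb 1 v}) ∧
    ∀ v w : Fin n → F, Lv v = Lv w ↔ v = w := by
  have hLI : ∀ v : Fin n → F, IsLeftIdeal (Lv v) := by
    intro v
    refine ⟨⟨0, by rw [Matrix.zero_mulVec, emb_zero]⟩, ?_, ?_, ?_⟩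
    · rintro a ⟨A, rfl⟩ b ⟨B, rfl⟩
      exact ⟨A + B, by rw [emb_add, Matrix.add_mulVec]⟩
    · rintro a ⟨A, rfl⟩
      exact ⟨-A, by rw [emb_neg, Matrix.neg_mulVec]⟩
    · rintro r a ⟨A, rfl⟩
      obtain ⟨B, w, rfl⟩ := exists_emb r
      exact ⟨B * A, by rw [emb_mul, Matrix.mulVec_mulVec]⟩
  have hmem_one : ∀ v : Fin n → F, emb 1 v ∈ Lv v := by
    intro v
    exact ⟨1, by rw [Matrix.one_mulVec]⟩
  constructor
  · intro v
    refine ⟨hLI v, ⟨hLI v, ?_, ?_⟩, ?_⟩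
    · -- not univ
      intro h
      have : emb 0 (Pi.single (⟨0, hn⟩ : Fin n) (1:F)) ∈ Lv v := h ▸ Set.mem_univ _
      obtain ⟨A, hA⟩ := this
      obtain ⟨h1, h2⟩ := emb_inj hA
      rw [← h1, Matrix.zero_mulVec] at h2
      have := congrFun h2 ⟨0, hn⟩
      simp at this
    · -- maximal
      intro L hL hss
      obtain ⟨hsub, hne⟩ := hss
      obtain ⟨x, hxL, hxnot⟩ := Set.not_subset.mp hne
      obtain ⟨A, u, rfl⟩ := exists_emb x
      have hz : u - A.mulVec v ≠ 0 := by
        intro h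
        exact hxnot ⟨A, by rw [sub_eq_zero] at h; rw [h]⟩
      have hmem : emb 0 (u - A.mulVec v) ∈ L := by
        have h1 : emb A (A.mulVec v) ∈ L := hsub ⟨A, rfl⟩
        have h2 := hL.2.1 _ hxL _ (hL.2.2.1 _ h1)
        rwa [emb_neg, emb_add, add_neg_cancel, ← sub_eq_add_neg] at h2
      exact key_univ v L hL hsub _ hz hmem
    · -- generated
      ext x
      constructor
      · rintro ⟨A, rfl⟩
        exact ⟨emb A 0, 0, by rw [emb_mul, mul_one, zero_smul, add_zero]⟩
      · rintro ⟨r, k, rfl⟩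
        obtain ⟨B, w, rfl⟩ := exists_emb r
        refine ⟨B + (k : F) • 1, ?_⟩
        rw [emb_mul, mul_one, emb_zsmul, emb_add, Matrix.add_mulVec,
          Matrix.smul_mulVec, Matrix.one_mulVec]
  · intro v w
    constructor
    · intro h
      have hv : emb 1 v ∈ Lv w := h ▸ hmem_one v
      obtain ⟨A, hA⟩ := hv
      obtain ⟨h1, h2⟩ := emb_inj hA
      rw [← h1, Matrix.one_mulVec] at h2
      exact h2
    · rintro rfl; rfl
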